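/- arXiv:1305.6683 — 2 statements merged into one kernel-verified Lean document; each statement's English description precedes it below -/
import Mathlib

section
/- Let φ : (0,∞) → (0,∞) be an increasing C¹ bijection onto its range such that t ↦ t φ'(t) is monotone increasing, with φ(t) ≤ c₁ t φ'(t) and φ(2t) ≤ c₀ φ(t) for all t. Fix ρ > 0, a unit vector y', and ξ ∈ ℝⁿ with y'·ξ ≠ 0. Define B(t,ξ) = t^{−ρ} ∫_{t/2}^{t} e^{−i φ(r) y'·ξ} r^{ρ−1} dr. Then |B(t,ξ)| ≤ C c₀ c₁ / (φ(t) |y'·ξ|) for a constant C depending only on ρ; moreover |B(t,ξ)| ≤ 1/ρ always. -/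
open Real Set MeasureTheory

/-- Layer-cake bound, monotone weight version. -/
lemma layer_mono (f : ℝ → ℂ) (g : ℝ → ℝ) (a b M : ℝ) (hab : a ≤ b)
    (hg : Monotone g) (hga : 0 ≤ g a) (hf : Continuous f)
    (hM : ∀ c ∈ Set.Icc a b, ‖∫ s in Set.Ioc c b, f s‖ ≤ M) :
    ‖∫ s in Set.Ioc a b, g s • f s‖ ≤ g b * M := by
  have hM0 : 0 ≤ M := by
    have h := hM b ⟨hab, le_rfl⟩
    simp only [Set.Ioc_self, Measure.restrict_empty, integral_zero_measure, norm_zero] at h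
    exact h
  have hgb : 0 ≤ g b := hga.trans (hg hab)
  rcases eq_or_lt_of_le hab with rfl | hab'
  · simp only [Set.Ioc_self, Measure.restrict_empty, integral_zero_measure, norm_zero]
    exact mul_nonneg hgb hM0
  -- set-up
  set μ := volume.restrict (Set.Ioc a b) with hμdef
  set A : Set (ℝ × ℝ) := {p : ℝ × ℝ | 0 < p.2} ∩ {p : ℝ × ℝ | p.2 < g p.1 - g a} with hAdef
  have hA : MeasurableSet A :=
    (measurableSet_lt measurable_const measurable_snd).inter
      (measurableSet_lt measurable_snd ((hg.measurable.comp measurable_fst).sub measurable_const))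
  set F : ℝ × ℝ → ℂ := A.indicator (fun p => f p.1) with hFdef
  have hFmeas : AEStronglyMeasurable F (μ.prod volume) :=
    ((hf.comp continuous_fst).stronglyMeasurable.indicator hA).aestronglyMeasurable
  have hIndInt : Integrable ((Set.Ioo (0:ℝ) (g b - g a)).indicator (fun _ => (1:ℝ))) volume := by
    rw [integrable_indicator_iff measurableSet_Ioo]
    exact integrableOn_const measure_Ioo_lt_top.ne
  have hfInt : Integrable f μ := hf.integrableOn_Ioc
  have hD : Integrable (fun p : ℝ × ℝ =>
      ‖f p.1‖ * (Set.Ioo (0:ℝ) (g b - g a)).indicator (fun _ => (1:ℝ)) p.2) (μ.prod volume) :=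
    hfInt.norm.mul_prod hIndInt
  have hfst : ∀ᵐ p : ℝ × ℝ ∂(μ.prod volume), p.1 ∈ Set.Ioc a b := by
    rw [ae_iff]
    have hset : {p : ℝ × ℝ | ¬ p.1 ∈ Set.Ioc a b} = (Set.Ioc a b)ᶜ ×ˢ (Set.univ : Set ℝ) := by
      ext p; simp [Set.mem_prod]
    rw [hset, Measure.prod_prod, hμdef, Measure.restrict_apply measurableSet_Ioc.compl]
    simp
  have hFbd : ∀ᵐ p : ℝ × ℝ ∂(μ.prod volume), ‖F p‖ ≤
      ‖f p.1‖ * (Set.Ioo (0:ℝ) (g b - g a)).indicator (fun _ => (1:ℝ)) p.2 := by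
    filter_upwards [hfst] with p hp
    by_cases hpA : p ∈ A
    · rw [hFdef, Set.indicator_of_mem hpA]
      have hmem : p.2 ∈ Set.Ioo (0:ℝ) (g b - g a) := by
        refine ⟨hpA.1, lt_of_lt_of_le hpA.2 ?_⟩
        have := hg hp.2
        linarith
      rw [Set.indicator_of_mem hmem]
      simp
    · rw [hFdef, Set.indicator_of_notMem hpA]
      simp only [norm_zero]
      exact mul_nonneg (norm_nonneg _) (Set.indicator_nonneg (fun _ _ => zero_le_one) _)
  have hFint : Integrable F (μ.prod volume) := hD.mono' hFmeas hFbd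
  -- Fubini
  have hswap : ∫ s, ∫ u, F (s, u) ∂volume ∂μ = ∫ u, ∫ s, F (s, u) ∂μ ∂volume :=
    integral_integral_swap hFint
  -- inner integral
  have hinner : ∀ s ∈ Set.Ioc a b, (∫ u, F (s, u) ∂volume) = (g s - g a) • f s := by
    intro s hs
    have heq : (fun u => F (s, u)) = (Set.Ioo (0:ℝ) (g s - g a)).indicator (fun _ => f s) := by
      ext u
      by_cases h : u ∈ Set.Ioo (0:ℝ) (g s - g a)
      · rw [Set.indicator_of_mem h, hFdef,
          Set.indicator_of_mem (show (s, u) ∈ A from ⟨h.1, h.2⟩)]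
      · rw [Set.indicator_of_notMem h, hFdef,
          Set.indicator_of_notMem (show ¬ (s, u) ∈ A from fun hm => h ⟨hm.1, hm.2⟩)]
    rw [heq, integral_indicator_const _ measurableSet_Ioo, Real.volume_real_Ioo, sub_zero,
      max_eq_left (by have := hg hs.1.le; linarith)]
  -- outer vanishing
  have houter0 : ∀ u, u ∉ Set.Ioo (0:ℝ) (g b - g a) → (∫ s, F (s, u) ∂μ) = 0 := by
    intro u hu
    have hz : ∀ s ∈ Set.Ioc a b, F (s, u) = 0 := by
      intro s hs
      rcases not_and_or.1 (fun h => hu ⟨h.1, h.2⟩) with h1 | h2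
      · exact Set.indicator_of_notMem (fun hm => h1 hm.1) _
      · refine Set.indicator_of_notMem (fun hm => h2 ?_) _
        have := hg hs.2
        have : g s - g a ≤ g b - g a := by linarith
        exact lt_of_lt_of_le hm.2 this
    calc ∫ s, F (s, u) ∂μ = ∫ s in Set.Ioc a b, (0:ℂ) ∂volume :=
          setIntegral_congr_fun measurableSet_Ioc hz
      _ = 0 := by simp
  -- outer bound
  have hbd : ∀ u ∈ Set.Ioo (0:ℝ) (g b - g a), ‖∫ s, F (s, u) ∂μ‖ ≤ M := by
    intro u hu
    set T : Set ℝ := {s | u < g s - g a} with hTdef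
    have hT : MeasurableSet T := measurableSet_lt measurable_const (hg.measurable.sub measurable_const)
    have heq : (fun s => F (s, u)) = T.indicator f := by
      ext s
      by_cases hs : s ∈ T
      · rw [Set.indicator_of_mem hs, hFdef, Set.indicator_of_mem (show (s,u) ∈ A from ⟨hu.1, hs⟩)]
      · rw [Set.indicator_of_notMem hs, hFdef,
          Set.indicator_of_notMem (show ¬ (s,u) ∈ A from fun hm => hs hm.2)]
    rw [show (∫ s, F (s, u) ∂μ) = ∫ s in Set.Ioc a b, T.indicator f s ∂volume from by
      rw [heq], setIntegral_indicator hT]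
    set S := Set.Ioc a b ∩ T with hSdef
    have hbS : b ∈ S := ⟨⟨hab', le_rfl⟩, hu.2⟩
    have hSne : S.Nonempty := ⟨b, hbS⟩
    have hSbdd : BddBelow S := ⟨a, fun s hs => hs.1.1.le⟩
    set c := sInf S with hcdef
    have hca : a ≤ c := le_csInf hSne (fun s hs => hs.1.1.le)
    have hcb : c ≤ b := csInf_le hSbdd hbS
    have hsub1 : Set.Ioc c b ⊆ S := by
      intro s hs
      obtain ⟨s', hs'S, hs's⟩ := exists_lt_of_csInf_lt hSne hs.1
      refine ⟨⟨hs'S.1.1.trans hs's, hs.2⟩, ?_⟩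
      have := hg hs's.le
      have h2 : u < g s' - g a := hs'S.2
      simp only [hTdef, Set.mem_setOf_eq]
      linarith
    have hsub2 : S ⊆ Set.Icc c b := fun s hs => ⟨csInf_le hSbdd hs, hs.1.2⟩
    have hae : S =ᵐ[volume] Set.Ioc c b := by
      rw [Filter.eventuallyEq_set]
      have h1 : volume (S \ Set.Ioc c b) = 0 := by
        refine measure_mono_null ?_ (measure_singleton c)
        intro s hs
        have h2 := hsub2 hs.1
        have h3 : ¬ (c < s ∧ s ≤ b) := fun h => hs.2 ⟨h.1, h.2⟩
        have : s = c := le_antisymm (by rcases not_and_or.1 h3 with h | h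
                                        · exact not_lt.1 h
                                        · exact absurd h2.2 h) h2.1
        simp [this]
      have h2 : volume (Set.Ioc c b \ S) = 0 := by
        refine measure_mono_null ?_ (measure_empty (μ := volume))
        intro s hs; exact absurd (hsub1 hs.1) hs.2
      have := MeasureTheory.ae_eq_set.2 ⟨h1, h2⟩
      exact Filter.eventuallyEq_set.1 this
    rw [setIntegral_congr_set hae]
    exact hM c ⟨hca, hcb⟩
  -- assemble the second term bound
  have hJind : (fun u => ∫ s, F (s, u) ∂μ)
      = (Set.Ioo (0:ℝ) (g b - g a)).indicator (fun u => ∫ s, F (s, u) ∂μ) := by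
    ext u
    by_cases hu : u ∈ Set.Ioo (0:ℝ) (g b - g a)
    · rw [Set.indicator_of_mem hu]
    · rw [Set.indicator_of_notMem hu]; exact houter0 u hu
  have hsecond : ‖∫ s in Set.Ioc a b, (g s - g a) • f s‖ ≤ (g b - g a) * M := by
    have h1 : ∫ s in Set.Ioc a b, (g s - g a) • f s = ∫ u, ∫ s, F (s, u) ∂μ ∂volume := by
      rw [← hswap]
      exact (setIntegral_congr_fun measurableSet_Ioc hinner).symm
    rw [h1, hJind, integral_indicator measurableSet_Ioo]
    have hJm : AEStronglyMeasurable (fun u => ∫ s, F (s, u) ∂μ)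
        (volume.restrict (Set.Ioo (0:ℝ) (g b - g a))) :=
      hFint.integral_prod_right.aestronglyMeasurable.restrict
    calc ‖∫ u in Set.Ioo (0:ℝ) (g b - g a), ∫ s, F (s, u) ∂μ ∂volume‖
        ≤ M * (volume (Set.Ioo (0:ℝ) (g b - g a))).toReal :=
          norm_setIntegral_le_of_norm_le_const_ae' measure_Ioo_lt_top
            (Filter.Eventually.of_forall (fun u => fun hu => hbd u hu))
      _ = (g b - g a) * M := by
          rw [Real.volume_Ioo, sub_zero, ENNReal.toReal_ofReal (by linarith [hg hab])]
          ring
  -- split and conclude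
  have hint2 : Integrable (fun s => (g s - g a) • f s) μ := by
    refine (hfInt.norm.const_mul (g b - g a)).mono'
      (((hg.measurable.sub measurable_const).aestronglyMeasurable).smul hfInt.aestronglyMeasurable) ?_
    rw [hμdef, ae_restrict_iff' measurableSet_Ioc]
    refine Filter.Eventually.of_forall (fun s hs => ?_)
    rw [norm_smul, Real.norm_eq_abs, abs_of_nonneg (by linarith [hg hs.1.le])]
    exact mul_le_mul_of_nonneg_right (by linarith [hg hs.2]) (norm_nonneg _)
  have hsplit : ∫ s in Set.Ioc a b, g s • f s
      = g a • (∫ s in Set.Ioc a b, f s) + ∫ s in Set.Ioc a b, (g s - g a) • f s := by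
    calc ∫ s in Set.Ioc a b, g s • f s
        = ∫ s in Set.Ioc a b, (g a • f s + (g s - g a) • f s) :=
          setIntegral_congr_fun measurableSet_Ioc (fun s _ => by rw [sub_smul]; abel)
      _ = (∫ s in Set.Ioc a b, g a • f s) + ∫ s in Set.Ioc a b, (g s - g a) • f s :=
          integral_add (hfInt.smul (g a)) hint2
      _ = g a • (∫ s in Set.Ioc a b, f s) + ∫ s in Set.Ioc a b, (g s - g a) • f s := by
          rw [integral_smul]
  rw [hsplit]
  calc ‖g a • (∫ s in Set.Ioc a b, f s) + ∫ s in Set.Ioc a b, (g s - g a) • f s‖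
      ≤ ‖g a • (∫ s in Set.Ioc a b, f s)‖ + ‖∫ s in Set.Ioc a b, (g s - g a) • f s‖ :=
        norm_add_le _ _
    _ ≤ g a * M + (g b - g a) * M := by
        refine add_le_add ?_ hsecond
        rw [norm_smul, Real.norm_eq_abs, abs_of_nonneg hga]
        exact mul_le_mul_of_nonneg_left (hM a ⟨le_rfl, hab⟩) hga
    _ = g b * M := by ring


/-- Layer-cake bound, antitone weight version. -/
lemma layer_anti (f : ℝ → ℂ) (g : ℝ → ℝ) (a b M : ℝ) (hab : a ≤ b)
    (hg : Antitone g) (hgb : 0 ≤ g b) (hf : Continuous f)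
    (hM : ∀ c ∈ Set.Icc a b, ‖∫ s in Set.Ioc a c, f s‖ ≤ M) :
    ‖∫ s in Set.Ioc a b, g s • f s‖ ≤ g a * M := by
  have hM0 : 0 ≤ M := by
    have h := hM a ⟨le_rfl, hab⟩
    simp only [Set.Ioc_self, Measure.restrict_empty, integral_zero_measure, norm_zero] at h
    exact h
  have hga : 0 ≤ g a := hgb.trans (hg hab)
  rcases eq_or_lt_of_le hab with rfl | hab'
  · simp only [Set.Ioc_self, Measure.restrict_empty, integral_zero_measure, norm_zero]
    exact mul_nonneg hga hM0
  set μ := volume.restrict (Set.Ioc a b) with hμdef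
  set A : Set (ℝ × ℝ) := {p : ℝ × ℝ | 0 < p.2} ∩ {p : ℝ × ℝ | p.2 < g p.1 - g b} with hAdef
  have hA : MeasurableSet A :=
    (measurableSet_lt measurable_const measurable_snd).inter
      (measurableSet_lt measurable_snd ((hg.measurable.comp measurable_fst).sub measurable_const))
  set F : ℝ × ℝ → ℂ := A.indicator (fun p => f p.1) with hFdef
  have hFmeas : AEStronglyMeasurable F (μ.prod volume) :=
    ((hf.comp continuous_fst).stronglyMeasurable.indicator hA).aestronglyMeasurable
  have hIndInt : Integrable ((Set.Ioo (0:ℝ) (g a - g b)).indicator (fun _ => (1:ℝ))) volume := by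
    rw [integrable_indicator_iff measurableSet_Ioo]
    exact integrableOn_const measure_Ioo_lt_top.ne
  have hfInt : Integrable f μ := hf.integrableOn_Ioc
  have hD : Integrable (fun p : ℝ × ℝ =>
      ‖f p.1‖ * (Set.Ioo (0:ℝ) (g a - g b)).indicator (fun _ => (1:ℝ)) p.2) (μ.prod volume) :=
    hfInt.norm.mul_prod hIndInt
  have hfst : ∀ᵐ p : ℝ × ℝ ∂(μ.prod volume), p.1 ∈ Set.Ioc a b := by
    rw [ae_iff]
    have hset : {p : ℝ × ℝ | ¬ p.1 ∈ Set.Ioc a b} = (Set.Ioc a b)ᶜ ×ˢ (Set.univ : Set ℝ) := by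
      ext p; simp [Set.mem_prod]
    rw [hset, Measure.prod_prod, hμdef, Measure.restrict_apply measurableSet_Ioc.compl]
    simp
  have hFbd : ∀ᵐ p : ℝ × ℝ ∂(μ.prod volume), ‖F p‖ ≤
      ‖f p.1‖ * (Set.Ioo (0:ℝ) (g a - g b)).indicator (fun _ => (1:ℝ)) p.2 := by
    filter_upwards [hfst] with p hp
    by_cases hpA : p ∈ A
    · rw [hFdef, Set.indicator_of_mem hpA]
      have hmem : p.2 ∈ Set.Ioo (0:ℝ) (g a - g b) := by
        refine ⟨hpA.1, lt_of_lt_of_le hpA.2 ?_⟩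
        have := hg hp.1.le
        linarith
      rw [Set.indicator_of_mem hmem]
      simp
    · rw [hFdef, Set.indicator_of_notMem hpA]
      simp only [norm_zero]
      exact mul_nonneg (norm_nonneg _) (Set.indicator_nonneg (fun _ _ => zero_le_one) _)
  have hFint : Integrable F (μ.prod volume) := hD.mono' hFmeas hFbd
  have hswap : ∫ s, ∫ u, F (s, u) ∂volume ∂μ = ∫ u, ∫ s, F (s, u) ∂μ ∂volume :=
    integral_integral_swap hFint
  have hinner : ∀ s ∈ Set.Ioc a b, (∫ u, F (s, u) ∂volume) = (g s - g b) • f s := by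
    intro s hs
    have heq : (fun u => F (s, u)) = (Set.Ioo (0:ℝ) (g s - g b)).indicator (fun _ => f s) := by
      ext u
      by_cases h : u ∈ Set.Ioo (0:ℝ) (g s - g b)
      · rw [Set.indicator_of_mem h, hFdef,
          Set.indicator_of_mem (show (s, u) ∈ A from ⟨h.1, h.2⟩)]
      · rw [Set.indicator_of_notMem h, hFdef,
          Set.indicator_of_notMem (show ¬ (s, u) ∈ A from fun hm => h ⟨hm.1, hm.2⟩)]
    rw [heq, integral_indicator_const _ measurableSet_Ioo, Real.volume_real_Ioo, sub_zero,
      max_eq_left (by have := hg hs.2; linarith)]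
  have houter0 : ∀ u, u ∉ Set.Ioo (0:ℝ) (g a - g b) → (∫ s, F (s, u) ∂μ) = 0 := by
    intro u hu
    have hz : ∀ s ∈ Set.Ioc a b, F (s, u) = 0 := by
      intro s hs
      rcases not_and_or.1 (fun h => hu ⟨h.1, h.2⟩) with h1 | h2
      · exact Set.indicator_of_notMem (fun hm => h1 hm.1) _
      · refine Set.indicator_of_notMem (fun hm => h2 ?_) _
        have := hg hs.1.le
        have hle : g s - g b ≤ g a - g b := by linarith
        exact lt_of_lt_of_le hm.2 hle
    calc ∫ s, F (s, u) ∂μ = ∫ s in Set.Ioc a b, (0:ℂ) ∂volume :=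
          setIntegral_congr_fun measurableSet_Ioc hz
      _ = 0 := by simp
  have hbd : ∀ u ∈ Set.Ioo (0:ℝ) (g a - g b), ‖∫ s, F (s, u) ∂μ‖ ≤ M := by
    intro u hu
    set T : Set ℝ := {s | u < g s - g b} with hTdef
    have hT : MeasurableSet T := measurableSet_lt measurable_const (hg.measurable.sub measurable_const)
    have heq : (fun s => F (s, u)) = T.indicator f := by
      ext s
      by_cases hs : s ∈ T
      · rw [Set.indicator_of_mem hs, hFdef, Set.indicator_of_mem (show (s,u) ∈ A from ⟨hu.1, hs⟩)]
      · rw [Set.indicator_of_notMem hs, hFdef,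
          Set.indicator_of_notMem (show ¬ (s,u) ∈ A from fun hm => hs hm.2)]
    rw [show (∫ s, F (s, u) ∂μ) = ∫ s in Set.Ioc a b, T.indicator f s ∂volume from by
      rw [heq], setIntegral_indicator hT]
    by_cases hSne : (Set.Ioc a b ∩ T).Nonempty
    · set S := Set.Ioc a b ∩ T with hSdef
      have hSbdd : BddAbove S := ⟨b, fun s hs => hs.1.2⟩
      set c := sSup S with hcdef
      obtain ⟨s₀, hs₀⟩ := hSne
      have hca : a ≤ c := hs₀.1.1.le.trans (le_csSup hSbdd hs₀)
      have hcb : c ≤ b := csSup_le ⟨s₀, hs₀⟩ (fun s hs => hs.1.2)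
      have hsub1 : Set.Ioo a c ⊆ S := by
        intro s hs
        obtain ⟨s', hs'S, hss'⟩ := exists_lt_of_lt_csSup ⟨s₀, hs₀⟩ hs.2
        refine ⟨⟨hs.1, hss'.le.trans hs'S.1.2⟩, ?_⟩
        have := hg hss'.le
        have h2 : u < g s' - g b := hs'S.2
        simp only [hTdef, Set.mem_setOf_eq]
        linarith
      have hsub2 : S ⊆ Set.Ioc a c := fun s hs => ⟨hs.1.1, le_csSup hSbdd hs⟩
      have hae : S =ᵐ[volume] Set.Ioc a c := by
        rw [Filter.eventuallyEq_set]
        have h1 : volume (S \ Set.Ioc a c) = 0 := by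
          refine measure_mono_null ?_ (measure_empty (μ := volume))
          intro s hs; exact absurd (hsub2 hs.1) hs.2
        have h2 : volume (Set.Ioc a c \ S) = 0 := by
          refine measure_mono_null ?_ (measure_singleton c)
          intro s hs
          have h3 : ¬ (a < s ∧ s < c) := fun h => hs.2 (hsub1 ⟨h.1, h.2⟩)
          have : s = c := by
            rcases not_and_or.1 h3 with h | h
            · exact absurd hs.1.1 h
            · exact le_antisymm hs.1.2 (not_lt.1 h)
          simp [this]
        have := MeasureTheory.ae_eq_set.2 ⟨h1, h2⟩
        exact Filter.eventuallyEq_set.1 this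
      rw [setIntegral_congr_set hae]
      exact hM c ⟨hca, hcb⟩
    · rw [Set.not_nonempty_iff_eq_empty.1 hSne]
      simpa using hM0
  have hJind : (fun u => ∫ s, F (s, u) ∂μ)
      = (Set.Ioo (0:ℝ) (g a - g b)).indicator (fun u => ∫ s, F (s, u) ∂μ) := by
    ext u
    by_cases hu : u ∈ Set.Ioo (0:ℝ) (g a - g b)
    · rw [Set.indicator_of_mem hu]
    · rw [Set.indicator_of_notMem hu]; exact houter0 u hu
  have hsecond : ‖∫ s in Set.Ioc a b, (g s - g b) • f s‖ ≤ (g a - g b) * M := by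
    have h1 : ∫ s in Set.Ioc a b, (g s - g b) • f s = ∫ u, ∫ s, F (s, u) ∂μ ∂volume := by
      rw [← hswap]
      exact (setIntegral_congr_fun measurableSet_Ioc hinner).symm
    rw [h1, hJind, integral_indicator measurableSet_Ioo]
    have hJm : AEStronglyMeasurable (fun u => ∫ s, F (s, u) ∂μ)
        (volume.restrict (Set.Ioo (0:ℝ) (g a - g b))) :=
      hFint.integral_prod_right.aestronglyMeasurable.restrict
    calc ‖∫ u in Set.Ioo (0:ℝ) (g a - g b), ∫ s, F (s, u) ∂μ ∂volume‖
        ≤ M * (volume (Set.Ioo (0:ℝ) (g a - g b))).toReal :=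
          norm_setIntegral_le_of_norm_le_const_ae' measure_Ioo_lt_top
            (Filter.Eventually.of_forall (fun u => fun hu => hbd u hu))
      _ = (g a - g b) * M := by
          rw [Real.volume_Ioo, sub_zero, ENNReal.toReal_ofReal (by linarith [hg hab])]
          ring
  have hint2 : Integrable (fun s => (g s - g b) • f s) μ := by
    refine (hfInt.norm.const_mul (g a - g b)).mono'
      (((hg.measurable.sub measurable_const).aestronglyMeasurable).smul hfInt.aestronglyMeasurable) ?_
    rw [hμdef, ae_restrict_iff' measurableSet_Ioc]
    refine Filter.Eventually.of_forall (fun s hs => ?_)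
    rw [norm_smul, Real.norm_eq_abs, abs_of_nonneg (by linarith [hg hs.2])]
    exact mul_le_mul_of_nonneg_right (by linarith [hg hs.1.le]) (norm_nonneg _)
  have hsplit : ∫ s in Set.Ioc a b, g s • f s
      = g b • (∫ s in Set.Ioc a b, f s) + ∫ s in Set.Ioc a b, (g s - g b) • f s := by
    calc ∫ s in Set.Ioc a b, g s • f s
        = ∫ s in Set.Ioc a b, (g b • f s + (g s - g b) • f s) :=
          setIntegral_congr_fun measurableSet_Ioc (fun s _ => by rw [sub_smul]; abel)
      _ = (∫ s in Set.Ioc a b, g b • f s) + ∫ s in Set.Ioc a b, (g s - g b) • f s :=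
          integral_add (hfInt.smul (g b)) hint2
      _ = g b • (∫ s in Set.Ioc a b, f s) + ∫ s in Set.Ioc a b, (g s - g b) • f s := by
          rw [integral_smul]
  rw [hsplit]
  calc ‖g b • (∫ s in Set.Ioc a b, f s) + ∫ s in Set.Ioc a b, (g s - g b) • f s‖
      ≤ ‖g b • (∫ s in Set.Ioc a b, f s)‖ + ‖∫ s in Set.Ioc a b, (g s - g b) • f s‖ :=
        norm_add_le _ _
    _ ≤ g b * M + (g a - g b) * M := by
        refine add_le_add ?_ hsecond
        rw [norm_smul, Real.norm_eq_abs, abs_of_nonneg hgb]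
        exact mul_le_mul_of_nonneg_left (hM b ⟨hab, le_rfl⟩) hgb
    _ = g a * M := by ring

/-- Let `φ : (0,∞) → (0,∞)` be an increasing `C¹` function with `t ↦ t φ'(t)`
monotone increasing, `φ t ≤ c₁ t φ' t` and `φ(2t) ≤ c₀ φ t`. For a unit vector `y'` and `ξ`
with `⟪y', ξ⟫ ≠ 0`, set `B(t,ξ) = t^(−ρ) ∫_{t/2}^t e^{−i φ(r) ⟪y',ξ⟫} r^{ρ−1} dr`.
Then `|B(t,ξ)| ≤ C c₀ c₁ / (φ t |⟪y',ξ⟫|)` with `C` depending only on `ρ`, and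
`|B(t,ξ)| ≤ 1/ρ` always. -/
theorem stmt15 (n : ℕ) (hn : 2 ≤ n) (ρ : ℝ) (hρ : 0 < ρ) :
    ∃ C > 0, ∀ (φ φ' : ℝ → ℝ) (c₀ c₁ : ℝ), 1 < c₀ → 0 < c₁ →
      (∀ t > 0, 0 < φ t) →
      StrictMonoOn φ (Set.Ioi 0) →
      (∀ t > 0, HasDerivAt φ (φ' t) t) →
      ContinuousOn φ' (Set.Ioi 0) →
      MonotoneOn (fun t => t * φ' t) (Set.Ioi 0) →
      (∀ t > 0, φ t ≤ c₁ * t * φ' t) →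
      (∀ t > 0, φ (2 * t) ≤ c₀ * φ t) →
      ∀ (y' ξ : EuclideanSpace ℝ (Fin n)), ‖y'‖ = 1 → inner ℝ y' ξ ≠ (0 : ℝ) →
      ∀ t > 0,
        ‖(t ^ (-ρ) : ℝ) • ∫ r in Set.Ioc (t / 2) t,
            (r ^ (ρ - 1) : ℝ) • Complex.exp (-(Complex.I) * ((φ r * inner ℝ y' ξ : ℝ) : ℂ))‖ ≤
          C * c₀ * c₁ / (φ t * |inner ℝ y' ξ|) ∧
        ‖(t ^ (-ρ) : ℝ) • ∫ r in Set.Ioc (t / 2) t,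
            (r ^ (ρ - 1) : ℝ) • Complex.exp (-(Complex.I) * ((φ r * inner ℝ y' ξ : ℝ) : ℂ))‖ ≤
          1 / ρ := by
  refine ⟨2, by norm_num, ?_⟩
  intro φ φ' c₀ c₁ hc₀ hc₁ hφpos hφsm hφderiv hφ'cont hmono hbound hdoub y' ξ hy' hθne t ht
  set θ : ℝ := inner ℝ y' ξ with hθdef
  have habs : 0 < |θ| := abs_pos.2 hθne
  have ht2 : 0 < t / 2 := by linarith
  have htt : t / 2 ≤ t := by linarith
  -- positivity of φ'
  have hφ'pos : ∀ r > 0, 0 < φ' r := by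
    intro r hr
    by_contra h
    push_neg at h
    have h1 := hbound r hr
    have h2 := hφpos r hr
    have h3 : c₁ * r * φ' r ≤ 0 := mul_nonpos_of_nonneg_of_nonpos (by positivity) h
    linarith
  -- the clamp function
  set cl : ℝ → ℝ := fun r => max (t / 2) (min r t) with hcldef
  have hclmono : Monotone cl := fun x y hxy => max_le_max le_rfl (min_le_min hxy le_rfl)
  have hclmem : ∀ r, cl r ∈ Set.Icc (t / 2) t :=
    fun r => ⟨le_max_left _ _, max_le htt (min_le_right _ _)⟩
  have hclpos : ∀ r, 0 < cl r := fun r => lt_of_lt_of_le ht2 (hclmem r).1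
  have hcl_eq : ∀ r ∈ Set.Icc (t / 2) t, cl r = r := fun r hr => by
    rw [hcldef]; simp only; rw [min_eq_left hr.2, max_eq_right hr.1]
  have hclcont : Continuous cl := continuous_const.max (continuous_id.min continuous_const)
  -- continuity of φ, φ' ∘ cl
  have hφcont : ContinuousOn φ (Set.Ioi 0) :=
    fun r hr => (hφderiv r hr).continuousAt.continuousWithinAt
  have hφclcont : Continuous (fun r => φ (cl r)) :=
    hφcont.comp_continuous hclcont (fun r => hclpos r)
  have hφ'clcont : Continuous (fun r => φ' (cl r)) :=
    hφ'cont.comp_continuous hclcont (fun r => hclpos r)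
  -- the oscillating factor
  set f₂ : ℝ → ℂ := fun r => (φ' (cl r)) •
      Complex.exp (-Complex.I * ((φ (cl r) * θ : ℝ) : ℂ)) with hf₂def
  have hf₂cont : Continuous f₂ := by
    refine hφ'clcont.smul (Complex.continuous_exp.comp ?_)
    exact continuous_const.mul (Complex.continuous_ofReal.comp (hφclcont.mul continuous_const))
  -- the two weights
  set g₂ : ℝ → ℝ := fun r => ((cl r) * φ' (cl r))⁻¹ with hg₂def
  have hprodpos : ∀ r, 0 < cl r * φ' (cl r) :=
    fun r => mul_pos (hclpos r) (hφ'pos _ (hclpos r))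
  have hg₂anti : Antitone g₂ := by
    intro x y hxy
    exact inv_anti₀ (hprodpos x)
      (hmono (hclpos x) (hclpos y) (hclmono hxy))
  have hg₂pos : ∀ r, 0 < g₂ r := fun r => inv_pos.2 (hprodpos r)
  have hg₂cont : Continuous g₂ :=
    (hclcont.mul hφ'clcont).inv₀ (fun r => ne_of_gt (hprodpos r))
  set g₁ : ℝ → ℝ := fun r => (cl r) ^ ρ with hg₁def
  have hg₁mono : Monotone g₁ :=
    fun x y hxy => Real.rpow_le_rpow (hclpos x).le (hclmono hxy) hρ.le
  -- FTC: oscillation estimate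
  have key : ∀ c ∈ Set.Icc (t / 2) t, ∀ d ∈ Set.Icc c t,
      ‖∫ s in Set.Ioc c d, f₂ s‖ ≤ 2 / |θ| := by
    intro c hc d hd
    set Fa : ℝ → ℂ := fun r =>
      (Complex.I / (θ : ℂ)) * Complex.exp (-Complex.I * ((φ (cl r) * θ : ℝ) : ℂ)) with hFadef
    have hFacont : Continuous Fa := by
      refine continuous_const.mul (Complex.continuous_exp.comp ?_)
      exact continuous_const.mul (Complex.continuous_ofReal.comp (hφclcont.mul continuous_const))
    have hθC : (θ : ℂ) ≠ 0 := Complex.ofReal_ne_zero.2 hθne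
    have hderiv : ∀ x ∈ Set.Ioo (t / 2) t, HasDerivAt Fa (f₂ x) x := by
      intro x hx
      have hx0 : 0 < x := lt_trans ht2 hx.1
      have hev : ∀ᶠ r in nhds x, cl r = r :=
        Filter.eventually_of_mem (isOpen_Ioo.mem_nhds hx)
          (fun r hr => hcl_eq r ⟨hr.1.le, hr.2.le⟩)
      have hG : HasDerivAt (fun r => (Complex.I / (θ : ℂ)) *
          Complex.exp (-Complex.I * ((φ r * θ : ℝ) : ℂ))) (f₂ x) x := by
        have h1 : HasDerivAt (fun r => φ r * θ) (φ' x * θ) x := (hφderiv x hx0).mul_const θ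
        have h2 : HasDerivAt (fun r => ((φ r * θ : ℝ) : ℂ)) ((φ' x * θ : ℝ) : ℂ) x :=
          h1.ofReal_comp
        have h3 : HasDerivAt (fun r => -Complex.I * ((φ r * θ : ℝ) : ℂ))
            (-Complex.I * ((φ' x * θ : ℝ) : ℂ)) x := h2.const_mul _
        have h4 := h3.cexp
        have h5 := h4.const_mul (Complex.I / (θ : ℂ))
        refine h5.congr_deriv ?_; symm
        rw [hf₂def]
        simp only
        rw [hcl_eq x ⟨hx.1.le, hx.2.le⟩, Complex.real_smul]
        push_cast
        field_simp
        ring_nf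
        simp [Complex.I_sq]
      exact hG.congr_of_eventuallyEq (by filter_upwards [hev] with r hr; rw [hFadef]; simp [hr])
    have hcd : c ≤ d := hd.1
    have hftc : ∫ r in c..d, f₂ r = Fa d - Fa c := by
      refine intervalIntegral.integral_eq_sub_of_hasDeriv_right_of_le hcd
        hFacont.continuousOn ?_ (hf₂cont.intervalIntegrable _ _)
      intro x hx
      exact (hderiv x ⟨lt_of_le_of_lt hc.1 hx.1, lt_of_lt_of_le hx.2 hd.2⟩).hasDerivWithinAt
    have hIoc : ∫ s in Set.Ioc c d, f₂ s = Fa d - Fa c := by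
      rw [← intervalIntegral.integral_of_le hcd, hftc]
    rw [hIoc]
    have hnorm : ∀ r, ‖Fa r‖ = 1 / |θ| := by
      intro r
      rw [hFadef]
      simp only [norm_mul, norm_div, Complex.norm_I, Complex.norm_real, Real.norm_eq_abs,
        Complex.norm_exp]
      have : (-Complex.I * ((φ (cl r) * θ : ℝ) : ℂ)).re = 0 := by simp
      rw [this, Real.exp_zero]
      ring
    calc ‖Fa d - Fa c‖ ≤ ‖Fa d‖ + ‖Fa c‖ := norm_sub_le _ _
      _ = 2 / |θ| := by rw [hnorm, hnorm]; ring
  -- first layer-cake application (inner, antitone weight)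
  have hstep1 : ∀ c ∈ Set.Icc (t / 2) t,
      ‖∫ s in Set.Ioc c t, g₂ s • f₂ s‖ ≤ g₂ (t / 2) * (2 / |θ|) := by
    intro c hc
    have h1 := layer_anti f₂ g₂ c t (2 / |θ|) hc.2 hg₂anti (hg₂pos t).le hf₂cont
      (fun d hd => key c hc d hd)
    refine h1.trans (mul_le_mul_of_nonneg_right (hg₂anti hc.1) (by positivity))
  -- second layer-cake application (outer, monotone weight)
  have hmain : ‖∫ s in Set.Ioc (t / 2) t, g₁ s • (g₂ s • f₂ s)‖
      ≤ g₁ t * (g₂ (t / 2) * (2 / |θ|)) :=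
    layer_mono (fun s => g₂ s • f₂ s) g₁ (t / 2) t _ htt hg₁mono
      (Real.rpow_nonneg (hclpos _).le _) (hg₂cont.smul hf₂cont) hstep1
  -- identify the integrand
  have hcong : ∀ r ∈ Set.Ioc (t / 2) t,
      (r ^ (ρ - 1) : ℝ) • Complex.exp (-Complex.I * ((φ r * θ : ℝ) : ℂ))
        = g₁ r • (g₂ r • f₂ r) := by
    intro r hr
    have hrIcc : r ∈ Set.Icc (t / 2) t := ⟨hr.1.le, hr.2⟩
    have hr0 : 0 < r := lt_trans ht2 hr.1
    have hclr : cl r = r := hcl_eq r hrIcc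
    rw [hg₁def, hg₂def, hf₂def]
    simp only [hclr]
    rw [smul_smul, smul_smul]
    congr 1
    have hφ'r : φ' r ≠ 0 := ne_of_gt (hφ'pos r hr0)
    rw [Real.rpow_sub hr0, Real.rpow_one]
    field_simp
  have hIeq : (∫ r in Set.Ioc (t / 2) t,
        (r ^ (ρ - 1) : ℝ) • Complex.exp (-Complex.I * ((φ r * θ : ℝ) : ℂ)))
      = ∫ s in Set.Ioc (t / 2) t, g₁ s • (g₂ s • f₂ s) :=
    setIntegral_congr_fun measurableSet_Ioc hcong
  -- norm of the prefactor
  have htρ : (0:ℝ) < t ^ ρ := Real.rpow_pos_of_pos ht ρ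
  have htnρ : (0:ℝ) < t ^ (-ρ) := Real.rpow_pos_of_pos ht _
  have hpre : ∀ z : ℂ, ‖(t ^ (-ρ) : ℝ) • z‖ = t ^ (-ρ) * ‖z‖ := by
    intro z; rw [norm_smul, Real.norm_eq_abs, abs_of_pos htnρ]
  constructor
  · -- oscillatory bound
    rw [hpre, hIeq]
    have hg₁t : g₁ t = t ^ ρ := by rw [hg₁def]; simp only; rw [hcl_eq t ⟨htt, le_rfl⟩]
    have hA : (0:ℝ) < (t / 2) * φ' (t / 2) := mul_pos ht2 (hφ'pos _ ht2)
    have hg₂t2 : g₂ (t / 2) = ((t / 2) * φ' (t / 2))⁻¹ := by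
      rw [hg₂def]; simp only; rw [hcl_eq (t / 2) ⟨le_rfl, htt⟩]
    have hφt : 0 < φ t := hφpos t ht
    have hkey : ((t / 2) * φ' (t / 2))⁻¹ ≤ c₀ * c₁ / φ t := by
      have h1 : φ (t / 2) ≤ c₁ * ((t / 2) * φ' (t / 2)) := by
        have := hbound (t / 2) ht2; linarith [mul_assoc c₁ (t/2) (φ' (t/2))]
      have h2 : φ t ≤ c₀ * φ (t / 2) := by
        have := hdoub (t / 2) ht2
        rw [show 2 * (t / 2) = t by ring] at this
        exact this
      rw [inv_eq_one_div, div_le_div_iff₀ hA hφt]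
      have hc₀' : (0:ℝ) < c₀ := by linarith
      nlinarith
    calc t ^ (-ρ) * ‖∫ s in Set.Ioc (t / 2) t, g₁ s • (g₂ s • f₂ s)‖
        ≤ t ^ (-ρ) * (g₁ t * (g₂ (t / 2) * (2 / |θ|))) :=
          mul_le_mul_of_nonneg_left hmain htnρ.le
      _ = g₂ (t / 2) * (2 / |θ|) := by
          rw [hg₁t, Real.rpow_neg ht.le, ← mul_assoc, inv_mul_cancel₀ (ne_of_gt htρ), one_mul]
      _ ≤ (c₀ * c₁ / φ t) * (2 / |θ|) := by
          rw [hg₂t2]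
          exact mul_le_mul_of_nonneg_right hkey (by positivity)
      _ = 2 * c₀ * c₁ / (φ t * |θ|) := by
          field_simp
  · -- trivial bound
    rw [hpre]
    have hnormint : ‖∫ r in Set.Ioc (t / 2) t,
        (r ^ (ρ - 1) : ℝ) • Complex.exp (-Complex.I * ((φ r * θ : ℝ) : ℂ))‖
        ≤ t ^ ρ / ρ := by
      calc ‖∫ r in Set.Ioc (t / 2) t,
            (r ^ (ρ - 1) : ℝ) • Complex.exp (-Complex.I * ((φ r * θ : ℝ) : ℂ))‖
          ≤ ∫ r in Set.Ioc (t / 2) t,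
            ‖(r ^ (ρ - 1) : ℝ) • Complex.exp (-Complex.I * ((φ r * θ : ℝ) : ℂ))‖ :=
            norm_integral_le_integral_norm _
        _ = ∫ r in Set.Ioc (t / 2) t, (r ^ (ρ - 1) : ℝ) := by
            refine setIntegral_congr_fun measurableSet_Ioc (fun r hr => ?_)
            have hr0 : 0 < r := lt_trans ht2 hr.1
            rw [norm_smul, Real.norm_eq_abs, abs_of_nonneg (Real.rpow_nonneg hr0.le _),
              Complex.norm_exp]
            have : (-Complex.I * ((φ r * θ : ℝ) : ℂ)).re = 0 := by simp
            rw [this, Real.exp_zero, mul_one]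
        _ = (t ^ ρ - (t / 2) ^ ρ) / ρ := by
            rw [← intervalIntegral.integral_of_le htt, integral_rpow (Or.inl (by linarith))]
            norm_num
        _ ≤ t ^ ρ / ρ := by
            have h0 : (0:ℝ) ≤ (t / 2) ^ ρ := Real.rpow_nonneg ht2.le _
            gcongr
            linarith
    calc t ^ (-ρ) * ‖∫ r in Set.Ioc (t / 2) t,
          (r ^ (ρ - 1) : ℝ) • Complex.exp (-Complex.I * ((φ r * θ : ℝ) : ℂ))‖
        ≤ t ^ (-ρ) * (t ^ ρ / ρ) := mul_le_mul_of_nonneg_left hnormint htnρ.le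
      _ = 1 / ρ := by
          rw [Real.rpow_neg ht.le, div_eq_mul_inv, ← mul_assoc,
            inv_mul_cancel₀ (ne_of_gt htρ), one_mul, one_div]
end

section
/- Let Ω ∈ L log L(S^{n−1}) with ‖Ω‖_{L log L} = 1. Define Λ = {m ∈ ℕ : σ{2^{m−1} < |Ω| ≤ 2^m} > 2^{−4m}} ∪ {0}, and for m ∈ Λ∩ℕ set Ω_m = Ω·χ_{{2^{m−1}<|Ω|≤2^m}} − σ(S^{n−1})⁻¹ ∫_{2^{m−1}<|Ω|≤2^m} Ω dσ, and Ω₀ = Ω − Σ_{m∈Λ∩ℕ} Ω_m. Then: (a) ∫_{S^{n−1}} Ω_m dσ = 0 for all m ∈ Λ∩ℕ; (b) Ω = Σ_{m∈Λ} Ω_m; (c) ‖Ω₀‖_{L²(S^{n−1})} + Σ_{m∈Λ} m ‖Ω_m‖_{L¹(S^{n−1})} ≤ C ‖Ω‖_{L log L(S^{n−1})} for a dimensional constant C. -/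
open Real Set MeasureTheory Metric ENNReal NNReal
open scoped Classical

noncomputable section

/-- The unit sphere `S^{n-1} ⊂ ℝⁿ`. -/
abbrev unitSphere (n : ℕ) := Metric.sphere (0 : EuclideanSpace ℝ (Fin n)) 1

/-- The surface measure on the unit sphere. -/
def sphereMeasure (n : ℕ) : Measure (unitSphere n) :=
  (volume : Measure (EuclideanSpace ℝ (Fin n))).toSphere

lemma aux_dyadic {t : ℝ} (ht : 1 < t) :
    ∃ m : ℕ, 1 ≤ m ∧ (2:ℝ) ^ ((m:ℤ) - 1) < t ∧ t ≤ (2:ℝ) ^ (m:ℤ) := by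
  obtain ⟨k, hk⟩ := pow_unbounded_of_one_lt t (one_lt_two (α := ℝ))
  have hne : ∃ m : ℕ, t ≤ (2:ℝ) ^ m := ⟨k, hk.le⟩
  classical
  have h1 : 1 ≤ Nat.find hne := by
    rcases Nat.eq_zero_or_pos (Nat.find hne) with h0 | h1
    · exfalso
      have := Nat.find_spec hne
      rw [h0] at this; simp at this; linarith
    · exact h1
  refine ⟨Nat.find hne, h1, ?_, ?_⟩
  · have hlt : ¬ t ≤ (2:ℝ) ^ (Nat.find hne - 1) := Nat.find_min hne (by omega)
    push_neg at hlt
    have hcast : ((Nat.find hne : ℤ) - 1) = ((Nat.find hne - 1 : ℕ) : ℤ) := by omega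
    rw [hcast, zpow_natCast]
    exact hlt
  · rw [zpow_natCast]; exact Nat.find_spec hne

lemma aux_mlog {m : ℕ} {t : ℝ} (h : (2:ℝ) ^ ((m:ℤ) - 1) < t) :
    (m:ℝ) * t ≤ (2 / Real.log 2) * (t * Real.log (2 + t)) := by
  have hlog2 : 0 < Real.log 2 := Real.log_pos one_lt_two
  have ht : 0 < t := lt_trans (zpow_pos two_pos _) h
  have h1 : Real.log 2 ≤ Real.log (2 + t) :=
    Real.log_le_log two_pos (by linarith)
  have h2 : ((m:ℝ) - 1) * Real.log 2 ≤ Real.log (2 + t) := by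
    have hlt : (2:ℝ) ^ ((m:ℤ) - 1) < 2 + t := by linarith
    have hlog := Real.log_le_log (zpow_pos two_pos ((m:ℤ)-1)) hlt.le
    rw [Real.log_zpow] at hlog
    calc ((m:ℝ) - 1) * Real.log 2 = ((m:ℤ) - 1 : ℤ) * Real.log 2 := by push_cast; ring
    _ ≤ Real.log (2 + t) := hlog
  have hb : (m:ℝ) * Real.log 2 ≤ 2 * Real.log (2 + t) := by nlinarith
  rw [div_mul_eq_mul_div, le_div_iff₀ hlog2]
  calc (m:ℝ) * t * Real.log 2 = ((m:ℝ) * Real.log 2) * t := by ring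
  _ ≤ (2 * Real.log (2 + t)) * t := mul_le_mul_of_nonneg_right hb ht.le
  _ = 2 * (t * Real.log (2 + t)) := by ring

lemma aux_rpow_half_le (x : ℝ≥0∞) : x ^ (1/(2:ℝ)) ≤ x + 1 := by
  rcases le_total x 1 with h | h
  · calc x ^ (1/(2:ℝ)) ≤ (1 : ℝ≥0∞) ^ (1/(2:ℝ)) :=
        ENNReal.rpow_le_rpow h (by norm_num)
    _ = 1 := ENNReal.one_rpow _
    _ ≤ x + 1 := le_add_self
  · calc x ^ (1/(2:ℝ)) ≤ x ^ (1:ℝ) :=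
        ENNReal.rpow_le_rpow_of_exponent_le h (by norm_num)
    _ = x := ENNReal.rpow_one x
    _ ≤ x + 1 := le_self_add

lemma aux_sq (u v : ℝ) : (u + v)^2 ≤ 2*u^2 + 2*v^2 := by nlinarith [sq_nonneg (u - v)]

/-- the `L log L` decomposition of `Ω` on the sphere. With
`Λ = {0} ∪ {m ≥ 1 : σ{2^{m−1} < |Ω| ≤ 2^m} > 2^{−4m}}`,
`Ω_m = Ω χ_{E_m} − σ(S^{n−1})⁻¹ ∫_{E_m} Ω dσ` for `m ∈ Λ ∩ ℕ_{≥1}` (and `Ω_m = 0` otherwise),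
and `Ω₀ = Ω − Σ_m Ω_m`, one has: (a) each `Ω_m` has vanishing mean; (b) `Ω = Σ_{m∈Λ} Ω_m`
(with `Ω₀` as the `m = 0` term); (c) `‖Ω₀‖_{L²} + Σ_m m ‖Ω_m‖_{L¹} ≤ C ‖Ω‖_{L log L} = C`. -/
theorem stmt17 (n : ℕ) (hn : 2 ≤ n) :
    ∃ C : ℝ≥0, 0 < C ∧
    ∀ Ω : unitSphere n → ℝ, Measurable Ω →
    Integrable (fun y => |Ω y| * Real.log (2 + |Ω y|)) (sphereMeasure n) →
    (∫ y, |Ω y| * Real.log (2 + |Ω y|) ∂(sphereMeasure n)) = 1 →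
    ∀ E : ℕ → Set (unitSphere n),
      (∀ m, E m = {y | (2 : ℝ) ^ (m - 1 : ℤ) < |Ω y| ∧ |Ω y| ≤ (2 : ℝ) ^ (m : ℤ)}) →
    ∀ Λ : Set ℕ,
      Λ = {0} ∪ {m : ℕ | 1 ≤ m ∧
        ENNReal.ofReal ((2 : ℝ) ^ (-(4 * (m : ℤ)))) < sphereMeasure n (E m)} →
    ∀ g : ℕ → unitSphere n → ℝ,
      (∀ m, g m = if m ∈ Λ ∧ m ≠ 0 then
          (fun y => Set.indicator (E m) Ω y -
            ((sphereMeasure n Set.univ).toReal)⁻¹ * ∫ z in E m, Ω z ∂(sphereMeasure n))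
        else 0) →
    ∀ Ω₀ : unitSphere n → ℝ,
      (∀ y, Ω₀ y = Ω y - ∑' m, g m y) →
    ((∀ m ∈ Λ, m ≠ 0 → ∫ y, g m y ∂(sphereMeasure n) = 0) ∧
     (∀ y, HasSum (fun m : ℕ => if m = 0 then Ω₀ y else g m y) (Ω y)) ∧
     ((∫⁻ y, ENNReal.ofReal ((Ω₀ y) ^ 2) ∂(sphereMeasure n)) ^ (1 / (2 : ℝ)) +
        ∑' m : ℕ, (m : ℝ≥0∞) * ∫⁻ y, ENNReal.ofReal |g m y| ∂(sphereMeasure n) ≤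
        (C : ℝ≥0∞))) := by
  classical
  haveI hfin : IsFiniteMeasure (sphereMeasure n) := by
    unfold sphereMeasure; infer_instance
  have hσtop : sphereMeasure n Set.univ ≠ ⊤ := measure_ne_top _ _
  set a : ℝ := (sphereMeasure n Set.univ).toReal with ha_def
  have ha_pos : 0 < a := by
    rw [ha_def]
    apply ENNReal.toReal_pos _ hσtop
    rw [sphereMeasure, Measure.toSphere_apply_univ, finrank_euclideanSpace_fin]
    have h1 : (0:ℝ≥0∞) < n := by
      exact_mod_cast Nat.pos_of_ne_zero (by omega)
    have h2 : 0 < volume (ball (0:EuclideanSpace ℝ (Fin n)) 1) :=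
      measure_ball_pos _ _ one_pos
    exact (ENNReal.mul_pos h1.ne' h2.ne').ne'
  have hσa : sphereMeasure n Set.univ = ENNReal.ofReal a := by
    rw [ha_def, ENNReal.ofReal_toReal hσtop]
  have hlog2 : 0 < Real.log 2 := Real.log_pos one_lt_two
  set cmax : ℝ := a⁻¹ * (Real.log 2)⁻¹ with hcmax_def
  have hcmax_nonneg : 0 ≤ cmax := by positivity
  set B : ℝ := 2 * (a + 2) + 2 * cmax ^ 2 * a with hB_def
  have hB_nonneg : 0 ≤ B := by positivity
  set Cr : ℝ := B + 1 + 4 / Real.log 2 with hCr_def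
  have hCr_pos : 0 < Cr := by positivity
  refine ⟨Cr.toNNReal, Real.toNNReal_pos.mpr hCr_pos, ?_⟩
  intro Ω hmeas hInt hnorm E hE Λ hΛ g hg Ω₀ hΩ₀
  -- basic facts
  have hlog_nonneg : ∀ y, 0 ≤ |Ω y| * Real.log (2 + |Ω y|) := by
    intro y
    exact mul_nonneg (abs_nonneg _) (Real.log_nonneg (by linarith [abs_nonneg (Ω y)]))
  have hEmeas : ∀ m, MeasurableSet (E m) := by
    intro m
    rw [hE m]
    exact (hmeas.abs) measurableSet_Ioc
  have hEdisj : Pairwise (Function.onFun Disjoint E) := by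
    intro i j hij
    have key : ∀ i j : ℕ, i < j → Disjoint (E i) (E j) := by
      intro i j hij
      rw [Set.disjoint_left]
      intro y hyi hyj
      rw [hE i] at hyi
      rw [hE j] at hyj
      have h1 : (2:ℝ) ^ (i:ℤ) ≤ (2:ℝ) ^ ((j:ℤ) - 1) :=
        zpow_le_zpow_right₀ one_le_two (by omega)
      have := hyi.2
      have := hyj.1
      linarith
    rcases lt_or_gt_of_ne hij with h | h
    · exact key i j h
    · exact (key j i h).symm
  have habs_int : Integrable (fun y => |Ω y|) (sphereMeasure n) := by
    apply Integrable.mono' (hInt.smul ((Real.log 2)⁻¹))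
      (hmeas.abs).aestronglyMeasurable
    apply ae_of_all
    intro y
    have h1 : Real.log 2 ≤ Real.log (2 + |Ω y|) :=
      Real.log_le_log two_pos (by linarith [abs_nonneg (Ω y)])
    have h2 : |Ω y| * Real.log 2 ≤ |Ω y| * Real.log (2 + |Ω y|) :=
      mul_le_mul_of_nonneg_left h1 (abs_nonneg _)
    rw [Real.norm_eq_abs, abs_abs]
    calc |Ω y| = (Real.log 2)⁻¹ * (|Ω y| * Real.log 2) := by field_simp
    _ ≤ (Real.log 2)⁻¹ * (|Ω y| * Real.log (2 + |Ω y|)) :=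
        mul_le_mul_of_nonneg_left h2 (by positivity)
    _ = ((Real.log 2)⁻¹ • fun y => |Ω y| * Real.log (2 + |Ω y|)) y := by
        simp [smul_eq_mul]
  have hΩ_int : Integrable Ω (sphereMeasure n) := by
    apply Integrable.mono' habs_int hmeas.aestronglyMeasurable
    exact ae_of_all _ fun y => le_of_eq (Real.norm_eq_abs _)
  have habs_le : ∫ y, |Ω y| ∂(sphereMeasure n) ≤ (Real.log 2)⁻¹ := by
    have h1 : ∫ y, Real.log 2 * |Ω y| ∂(sphereMeasure n) ≤
        ∫ y, |Ω y| * Real.log (2 + |Ω y|) ∂(sphereMeasure n) := by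
      apply integral_mono (habs_int.const_mul _) hInt
      intro y
      have h1 : Real.log 2 ≤ Real.log (2 + |Ω y|) :=
        Real.log_le_log two_pos (by linarith [abs_nonneg (Ω y)])
      calc Real.log 2 * |Ω y| = |Ω y| * Real.log 2 := by ring
      _ ≤ |Ω y| * Real.log (2 + |Ω y|) := mul_le_mul_of_nonneg_left h1 (abs_nonneg _)
    rw [integral_const_mul, hnorm] at h1
    rw [inv_eq_one_div, le_div_iff₀ hlog2]
    linarith
  have hIntOn : ∀ m, IntegrableOn Ω (E m) (sphereMeasure n) :=
    fun m => hΩ_int.integrableOn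
  have hIabs : ∀ m, IntegrableOn (fun y => |Ω y|) (E m) (sphereMeasure n) :=
    fun m => habs_int.integrableOn
  have hsetint_nonneg : ∀ m, 0 ≤ ∫ y in E m, |Ω y| ∂(sphereMeasure n) :=
    fun m => setIntegral_nonneg (hEmeas m) fun y _ => abs_nonneg _
  have hsum_range : ∀ N : ℕ, ∑ i ∈ Finset.range N, ∫ y in E i, |Ω y| ∂(sphereMeasure n) ≤
      (Real.log 2)⁻¹ := by
    intro N
    have h1 : ∑ i ∈ Finset.range N, ∫ y in E i, |Ω y| ∂(sphereMeasure n) =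
        ∫ y in ⋃ i ∈ Finset.range N, E i, |Ω y| ∂(sphereMeasure n) := by
      rw [integral_biUnion_finset (Finset.range N) (fun i _ => hEmeas i)
        (fun i _ j _ hij => hEdisj hij) (fun i _ => hIabs i)]
    rw [h1]
    calc ∫ y in ⋃ i ∈ Finset.range N, E i, |Ω y| ∂(sphereMeasure n) ≤
        ∫ y, |Ω y| ∂(sphereMeasure n) :=
      setIntegral_le_integral habs_int (ae_of_all _ fun y => abs_nonneg _)
    _ ≤ (Real.log 2)⁻¹ := habs_le
  have hSummableI : Summable (fun m => ∫ y in E m, |Ω y| ∂(sphereMeasure n)) :=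
    summable_of_sum_range_le hsetint_nonneg hsum_range
  have htsumI : ∑' m, ∫ y in E m, |Ω y| ∂(sphereMeasure n) ≤ (Real.log 2)⁻¹ :=
    Summable.tsum_le_of_sum_range_le hSummableI hsum_range
  -- the constants c_m
  set cm : ℕ → ℝ := fun m => a⁻¹ * ∫ z in E m, Ω z ∂(sphereMeasure n) with hcm_def
  have hcm_le : ∀ m, |cm m| ≤ a⁻¹ * ∫ y in E m, |Ω y| ∂(sphereMeasure n) := by
    intro m
    rw [hcm_def, abs_mul, abs_inv, abs_of_pos ha_pos]
    apply mul_le_mul_of_nonneg_left _ (by positivity)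
    calc |∫ z in E m, Ω z ∂(sphereMeasure n)| = ‖∫ z in E m, Ω z ∂(sphereMeasure n)‖ :=
      (Real.norm_eq_abs _).symm
    _ ≤ ∫ z in E m, ‖Ω z‖ ∂(sphereMeasure n) := norm_integral_le_integral_norm _
    _ = ∫ z in E m, |Ω z| ∂(sphereMeasure n) := by simp [Real.norm_eq_abs]
  -- the constant tail sequence
  set s2 : ℕ → ℝ := fun m => if m ∈ Λ ∧ m ≠ 0 then cm m else 0 with hs2_def
  have hs2_bound : ∀ m, ‖s2 m‖ ≤ a⁻¹ * ∫ y in E m, |Ω y| ∂(sphereMeasure n) := by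
    intro m
    rw [hs2_def]
    simp only [Real.norm_eq_abs]
    split_ifs with h
    · exact hcm_le m
    · simp only [abs_zero]
      positivity
  have hs2_summable : Summable s2 :=
    Summable.of_norm_bounded (hSummableI.mul_left a⁻¹) hs2_bound
  set c : ℝ := ∑' m, s2 m with hc_def
  have hc_le : |c| ≤ cmax := by
    rw [hc_def, hcmax_def]
    calc |∑' m, s2 m| = ‖∑' m, s2 m‖ := (Real.norm_eq_abs _).symm
    _ ≤ ∑' m, ‖s2 m‖ := norm_tsum_le_tsum_norm (hs2_summable.abs)
    _ ≤ ∑' m, a⁻¹ * ∫ y in E m, |Ω y| ∂(sphereMeasure n) :=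
        Summable.tsum_le_tsum hs2_bound hs2_summable.abs (hSummableI.mul_left a⁻¹)
    _ = a⁻¹ * ∑' m, ∫ y in E m, |Ω y| ∂(sphereMeasure n) := tsum_mul_left
    _ ≤ a⁻¹ * (Real.log 2)⁻¹ := mul_le_mul_of_nonneg_left htsumI (by positivity)
  -- decomposition of g
  have hgdecomp : ∀ m y, g m y =
      (if m ∈ Λ ∧ m ≠ 0 then (E m).indicator Ω y else 0) - s2 m := by
    intro m y
    rw [hg m, hs2_def]
    by_cases h : m ∈ Λ ∧ m ≠ 0 <;> simp [h, hcm_def, ha_def]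
  have hs1_summable : ∀ y,
      Summable (fun m => if m ∈ Λ ∧ m ≠ 0 then (E m).indicator Ω y else 0) := by
    intro y
    by_cases hex : ∃ k, y ∈ E k
    · obtain ⟨m0, hm0⟩ := hex
      apply summable_of_ne_finset_zero (s := {m0})
      intro m hm
      simp only [Finset.mem_singleton] at hm
      split_ifs with hP
      · apply Set.indicator_of_notMem
        intro hy
        exact hm (by
          by_contra hne
          exact (Set.disjoint_left.mp (hEdisj hne) hy) hm0)
      · rfl
    · push_neg at hex
      apply summable_of_ne_finset_zero (s := ∅)
      intro m _
      split_ifs with hP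
      · exact Set.indicator_of_notMem (hex m) _
      · rfl
  have hgy_eq : ∀ y, (fun m => g m y) =
      (fun m => if m ∈ Λ ∧ m ≠ 0 then (E m).indicator Ω y else 0) - s2 := by
    intro y
    funext m
    exact hgdecomp m y
  have hgy_summable : ∀ y, Summable (fun m => g m y) := by
    intro y
    rw [hgy_eq y]
    exact (hs1_summable y).sub hs2_summable
  -- F : the complement set
  set F : Set (unitSphere n) := ⋂ m ∈ {k : ℕ | k ∈ Λ ∧ k ≠ 0}, (E m)ᶜ with hF_def
  have hF_mem : ∀ y, y ∈ F ↔ ∀ m, (m ∈ Λ ∧ m ≠ 0) → y ∉ E m := by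
    intro y
    rw [hF_def]
    simp
  have hF_meas : MeasurableSet F := by
    rw [hF_def]
    exact MeasurableSet.biInter (Set.to_countable _) fun m _ => (hEmeas m).compl
  have htsum_s1 : ∀ y, Ω y -
      (∑' m, if m ∈ Λ ∧ m ≠ 0 then (E m).indicator Ω y else 0) = F.indicator Ω y := by
    intro y
    by_cases hy : ∃ m, (m ∈ Λ ∧ m ≠ 0) ∧ y ∈ E m
    · obtain ⟨m0, hP0, hy0⟩ := hy
      have heq : (fun m => if m ∈ Λ ∧ m ≠ 0 then (E m).indicator Ω y else 0) =
          fun m => if m = m0 then Ω y else 0 := by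
        funext m
        by_cases hmm : m = m0
        · subst hmm
          rw [if_pos hP0, Set.indicator_of_mem hy0, if_pos rfl]
        · rw [if_neg hmm]
          split_ifs with hP
          · exact Set.indicator_of_notMem
              (fun hy' => (Set.disjoint_left.mp (hEdisj hmm) hy') hy0) _
          · rfl
      rw [heq, tsum_ite_eq m0 (fun _ => Ω y)]
      have hyF : y ∉ F := by
        rw [hF_mem]
        push_neg
        exact ⟨m0, hP0, hy0⟩
      rw [Set.indicator_of_notMem hyF]
      ring
    · push_neg at hy
      have heq : (fun m => if m ∈ Λ ∧ m ≠ 0 then (E m).indicator Ω y else 0) =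
          fun _ => (0:ℝ) := by
        funext m
        split_ifs with hP
        · exact Set.indicator_of_notMem (hy m hP) _
        · rfl
      rw [heq, tsum_zero]
      rw [Set.indicator_of_mem ((hF_mem y).mpr (fun m hP => hy m hP))]
      ring
  have hΩ₀' : ∀ y, Ω₀ y = F.indicator Ω y + c := by
    intro y
    rw [hΩ₀ y]
    have h1 : ∑' m, g m y =
        (∑' m, if m ∈ Λ ∧ m ≠ 0 then (E m).indicator Ω y else 0) - ∑' m, s2 m := by
      calc ∑' m, g m y = ∑' m, ((fun m => if m ∈ Λ ∧ m ≠ 0 then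
            (E m).indicator Ω y else 0) - s2) m := by rw [← hgy_eq y]
      _ = _ := Summable.tsum_sub (hs1_summable y) hs2_summable
    rw [h1, ← hc_def]
    have := htsum_s1 y
    linarith
  refine ⟨?_, ?_, ?_⟩
  · -- (a) vanishing mean
    intro m hmΛ hm0
    rw [hg m, if_pos ⟨hmΛ, hm0⟩]
    have hind : Integrable ((E m).indicator Ω) (sphereMeasure n) :=
      (integrable_indicator_iff (hEmeas m)).mpr (hIntOn m)
    rw [integral_sub hind (integrable_const _), integral_indicator (hEmeas m),
      integral_const, smul_eq_mul, measureReal_def, ← ha_def]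
    field_simp
    ring
  · -- (b) HasSum
    intro y
    have hg0 : g 0 y = 0 := by rw [hg 0]; simp
    have heq : (fun m : ℕ => if m = 0 then Ω₀ y else g m y) =
        fun m => g m y + (if m = 0 then Ω₀ y else 0) := by
      funext m
      by_cases hm : m = 0
      · subst hm; rw [if_pos rfl, if_pos rfl, hg0]; ring
      · rw [if_neg hm, if_neg hm]; ring
    rw [heq]
    have h1 : HasSum (fun m => g m y) (∑' m, g m y) := (hgy_summable y).hasSum
    have h2 : HasSum (fun m : ℕ => if m = 0 then Ω₀ y else 0) (Ω₀ y) :=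
      hasSum_ite_eq 0 (Ω₀ y)
    have h3 := h1.add h2
    have h4 : (∑' m, g m y) + Ω₀ y = Ω y := by rw [hΩ₀ y]; ring
    rwa [h4] at h3
  · -- (c) the quantitative bound
    set J : ℕ → ℝ≥0∞ := fun m =>
      ∫⁻ y in E m, ENNReal.ofReal (|Ω y| * Real.log (2 + |Ω y|)) ∂(sphereMeasure n)
      with hJ_def
    have hJ_total : ∑' m, J m ≤ 1 := by
      calc ∑' m, J m = ∫⁻ y in ⋃ m, E m,
          ENNReal.ofReal (|Ω y| * Real.log (2 + |Ω y|)) ∂(sphereMeasure n) :=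
        (lintegral_iUnion hEmeas hEdisj _).symm
      _ ≤ ∫⁻ y, ENNReal.ofReal (|Ω y| * Real.log (2 + |Ω y|)) ∂(sphereMeasure n) :=
        setLIntegral_le_lintegral _ _
      _ = ENNReal.ofReal (∫ y, |Ω y| * Real.log (2 + |Ω y|) ∂(sphereMeasure n)) :=
        (ofReal_integral_eq_lintegral_ofReal hInt (ae_of_all _ hlog_nonneg)).symm
      _ = 1 := by rw [hnorm, ENNReal.ofReal_one]
    set I : ℕ → ℝ≥0∞ := fun m =>
      ∫⁻ y in E m, ENNReal.ofReal |Ω y| ∂(sphereMeasure n) with hI_def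
    have hIm_eq : ∀ m, I m = ENNReal.ofReal (∫ y in E m, |Ω y| ∂(sphereMeasure n)) :=
      fun m => (ofReal_integral_eq_lintegral_ofReal (hIabs m)
        (ae_of_all _ fun y => abs_nonneg _)).symm
    have hterm : ∀ m : ℕ, (m:ℝ≥0∞) * ∫⁻ y, ENNReal.ofReal |g m y| ∂(sphereMeasure n) ≤
        ENNReal.ofReal (4 / Real.log 2) * J m := by
      intro m
      by_cases hP : m ∈ Λ ∧ m ≠ 0
      · have hsm : s2 m = cm m := by rw [hs2_def]; exact if_pos hP
        have hptwise : ∀ y, ENNReal.ofReal |g m y| ≤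
            (E m).indicator (fun z => ENNReal.ofReal |Ω z|) y + ENNReal.ofReal |cm m| := by
          intro y
          have h1 : |g m y| ≤ (E m).indicator (fun z => |Ω z|) y + |cm m| := by
            rw [hgdecomp m y, if_pos hP, hsm]
            calc |(E m).indicator Ω y - cm m| ≤ |(E m).indicator Ω y| + |cm m| :=
              abs_sub _ _
            _ ≤ _ := by
              have : |(E m).indicator Ω y| = (E m).indicator (fun z => |Ω z|) y := by
                by_cases hy : y ∈ E m <;> simp [hy]
              rw [this]
          calc ENNReal.ofReal |g m y| ≤
              ENNReal.ofReal ((E m).indicator (fun z => |Ω z|) y + |cm m|) :=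
            ENNReal.ofReal_le_ofReal h1
          _ = ENNReal.ofReal ((E m).indicator (fun z => |Ω z|) y) +
              ENNReal.ofReal |cm m| :=
            ENNReal.ofReal_add (by
              by_cases hy : y ∈ E m <;> simp [hy, abs_nonneg]) (abs_nonneg _)
          _ = _ := by
            congr 1
            by_cases hy : y ∈ E m <;> simp [hy]
        have hlint1 : ∫⁻ y, ENNReal.ofReal |g m y| ∂(sphereMeasure n) ≤
            I m + ENNReal.ofReal |cm m| * sphereMeasure n Set.univ := by
          calc ∫⁻ y, ENNReal.ofReal |g m y| ∂(sphereMeasure n) ≤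
              ∫⁻ y, ((E m).indicator (fun z => ENNReal.ofReal |Ω z|) y +
                ENNReal.ofReal |cm m|) ∂(sphereMeasure n) := lintegral_mono hptwise
          _ = ∫⁻ y, (E m).indicator (fun z => ENNReal.ofReal |Ω z|) y ∂(sphereMeasure n) +
              ENNReal.ofReal |cm m| * sphereMeasure n Set.univ := by
            rw [lintegral_add_right _ measurable_const, lintegral_const]
          _ = I m + ENNReal.ofReal |cm m| * sphereMeasure n Set.univ := by
            rw [lintegral_indicator (hEmeas m)]
        have hconst : ENNReal.ofReal |cm m| * sphereMeasure n Set.univ ≤ I m := by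
          rw [hσa, hIm_eq m]
          calc ENNReal.ofReal |cm m| * ENNReal.ofReal a ≤
              ENNReal.ofReal (a⁻¹ * ∫ y in E m, |Ω y| ∂(sphereMeasure n)) *
                ENNReal.ofReal a := mul_le_mul_left (ENNReal.ofReal_le_ofReal (hcm_le m)) _
          _ = ENNReal.ofReal ((a⁻¹ * ∫ y in E m, |Ω y| ∂(sphereMeasure n)) * a) :=
            (ENNReal.ofReal_mul (by positivity)).symm
          _ = ENNReal.ofReal (∫ y in E m, |Ω y| ∂(sphereMeasure n)) := by
            congr 1
            field_simp
        have hstep3 : (m:ℝ≥0∞) * I m ≤ ENNReal.ofReal (2 / Real.log 2) * J m := by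
          have hmeas2 : Measurable (fun y : unitSphere n =>
              ENNReal.ofReal (2 / Real.log 2) *
                ENNReal.ofReal (|Ω y| * Real.log (2 + |Ω y|))) := by
            apply Measurable.const_mul
            exact ENNReal.measurable_ofReal.comp
              ((hmeas.abs).mul ((Real.measurable_log).comp
                (measurable_const.add hmeas.abs)))
          calc (m:ℝ≥0∞) * I m =
              ∫⁻ y in E m, (m:ℝ≥0∞) * ENNReal.ofReal |Ω y| ∂(sphereMeasure n) :=
            (lintegral_const_mul' _ _ (ENNReal.natCast_ne_top m)).symm
          _ ≤ ∫⁻ y in E m, ENNReal.ofReal (2 / Real.log 2) *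
              ENNReal.ofReal (|Ω y| * Real.log (2 + |Ω y|)) ∂(sphereMeasure n) := by
            apply setLIntegral_mono hmeas2
            intro y hy
            rw [hE m] at hy
            calc (m:ℝ≥0∞) * ENNReal.ofReal |Ω y|
                = ENNReal.ofReal ((m:ℝ) * |Ω y|) := by
                  rw [ENNReal.ofReal_mul (Nat.cast_nonneg m), ENNReal.ofReal_natCast]
              _ ≤ ENNReal.ofReal ((2 / Real.log 2) * (|Ω y| * Real.log (2 + |Ω y|))) :=
                  ENNReal.ofReal_le_ofReal (aux_mlog hy.1)
              _ = _ := ENNReal.ofReal_mul (by positivity)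
          _ = ENNReal.ofReal (2 / Real.log 2) * J m :=
            lintegral_const_mul' _ _ ENNReal.ofReal_ne_top
        calc (m:ℝ≥0∞) * ∫⁻ y, ENNReal.ofReal |g m y| ∂(sphereMeasure n) ≤
            (m:ℝ≥0∞) * (I m + ENNReal.ofReal |cm m| * sphereMeasure n Set.univ) :=
          mul_le_mul_right hlint1 _
        _ ≤ (m:ℝ≥0∞) * (2 * I m) := by
          apply mul_le_mul_right
          rw [two_mul]
          exact add_le_add_right hconst _
        _ = 2 * ((m:ℝ≥0∞) * I m) := by ring
        _ ≤ 2 * (ENNReal.ofReal (2 / Real.log 2) * J m) := mul_le_mul_right hstep3 _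
        _ = ENNReal.ofReal (4 / Real.log 2) * J m := by
          rw [← mul_assoc]
          congr 1
          rw [show (2:ℝ≥0∞) = ENNReal.ofReal 2 from (ENNReal.ofReal_ofNat 2).symm,
            ← ENNReal.ofReal_mul (by norm_num)]
          congr 1
          ring
      · have hzero : g m = 0 := by rw [hg m, if_neg hP]
        simp only [hzero, Pi.zero_apply, abs_zero, ENNReal.ofReal_zero,
          lintegral_zero, mul_zero]
        exact zero_le
    have hS : ∑' m : ℕ, (m:ℝ≥0∞) * ∫⁻ y, ENNReal.ofReal |g m y| ∂(sphereMeasure n) ≤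
        ENNReal.ofReal (4 / Real.log 2) := by
      calc ∑' m : ℕ, (m:ℝ≥0∞) * ∫⁻ y, ENNReal.ofReal |g m y| ∂(sphereMeasure n) ≤
          ∑' m, ENNReal.ofReal (4 / Real.log 2) * J m := ENNReal.tsum_le_tsum hterm
      _ = ENNReal.ofReal (4 / Real.log 2) * ∑' m, J m := ENNReal.tsum_mul_left
      _ ≤ ENNReal.ofReal (4 / Real.log 2) * 1 := mul_le_mul_right hJ_total _
      _ = ENNReal.ofReal (4 / Real.log 2) := mul_one _
    -- the L² part
    have hFbound : ∫⁻ y in F, ENNReal.ofReal ((Ω y)^2) ∂(sphereMeasure n) ≤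
        ENNReal.ofReal a + 2 := by
      set H : ℕ → Set (unitSphere n) := fun m =>
        if m = 0 then {y | |Ω y| ≤ 1} else (if m ∈ Λ then ∅ else E m) with hH_def
      have hFH : F ⊆ ⋃ m, H m := by
        intro y hy
        by_cases h1 : |Ω y| ≤ 1
        · exact Set.mem_iUnion.mpr ⟨0, by simp [hH_def, h1]⟩
        · push_neg at h1
          obtain ⟨m, hm1, hm2, hm3⟩ := aux_dyadic h1
          have hyE : y ∈ E m := by rw [hE m]; exact ⟨hm2, hm3⟩
          have hmΛ : m ∉ Λ := by
            intro hmem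
            exact ((hF_mem y).mp hy m ⟨hmem, by omega⟩) hyE
          refine Set.mem_iUnion.mpr ⟨m, ?_⟩
          rw [hH_def]
          simp only []
          rw [if_neg (by omega : ¬ m = 0), if_neg hmΛ]
          exact hyE
      have hHm : ∀ m, ∫⁻ y in H m, ENNReal.ofReal ((Ω y)^2) ∂(sphereMeasure n) ≤
          (if m = 0 then ENNReal.ofReal a else 0) + (2⁻¹ : ℝ≥0∞)^m := by
        intro m
        by_cases hm0 : m = 0
        · subst hm0
          rw [if_pos rfl]
          have hH0 : H 0 = {y | |Ω y| ≤ 1} := by simp [hH_def]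
          have hb : ∫⁻ y in H 0, ENNReal.ofReal ((Ω y)^2) ∂(sphereMeasure n) ≤
              ∫⁻ _ in H 0, (1:ℝ≥0∞) ∂(sphereMeasure n) := by
            apply setLIntegral_mono measurable_const
            intro y hy
            rw [hH0] at hy
            have hy' : |Ω y| ≤ 1 := hy
            have h2 : (Ω y)^2 ≤ 1 := by nlinarith [sq_abs (Ω y), abs_nonneg (Ω y)]
            exact ENNReal.ofReal_le_one.mpr h2
          refine le_trans hb ?_
          rw [setLIntegral_one]
          refine le_trans (measure_mono (Set.subset_univ _)) ?_
          rw [hσa]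
          exact le_self_add
        · rw [if_neg hm0]
          by_cases hmΛ : m ∈ Λ
          · have hHm' : H m = ∅ := by rw [hH_def]; simp [hm0, hmΛ]
            rw [hHm', Measure.restrict_empty, lintegral_zero_measure]
            exact zero_le
          · have hHm' : H m = E m := by rw [hH_def]; simp [hm0, hmΛ]
            have hEsmall : sphereMeasure n (E m) ≤
                ENNReal.ofReal ((2:ℝ) ^ (-(4 * (m:ℤ)))) := by
              rw [hΛ] at hmΛ
              simp only [Set.mem_union, Set.mem_singleton_iff, Set.mem_setOf_eq,
                not_or, not_and, not_lt] at hmΛ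
              exact hmΛ.2 (by omega)
            rw [hHm']
            have hb1 : ∫⁻ y in E m, ENNReal.ofReal ((Ω y)^2) ∂(sphereMeasure n) ≤
                ∫⁻ _ in E m, ENNReal.ofReal (((2:ℝ)^(m:ℤ))^2) ∂(sphereMeasure n) := by
              apply setLIntegral_mono measurable_const
              intro y hy
              rw [hE m] at hy
              apply ENNReal.ofReal_le_ofReal
              rw [← sq_abs]
              exact pow_le_pow_left₀ (abs_nonneg _) hy.2 2
            calc ∫⁻ y in E m, ENNReal.ofReal ((Ω y)^2) ∂(sphereMeasure n) ≤
                ∫⁻ _ in E m, ENNReal.ofReal (((2:ℝ)^(m:ℤ))^2) ∂(sphereMeasure n) := hb1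
            _ = ENNReal.ofReal (((2:ℝ)^(m:ℤ))^2) * sphereMeasure n (E m) :=
              setLIntegral_const _ _
            _ ≤ ENNReal.ofReal (((2:ℝ)^(m:ℤ))^2) *
                ENNReal.ofReal ((2:ℝ) ^ (-(4 * (m:ℤ)))) :=
              mul_le_mul_right hEsmall _
            _ = ENNReal.ofReal (((2:ℝ)^(m:ℤ))^2 * (2:ℝ) ^ (-(4 * (m:ℤ)))) :=
              (ENNReal.ofReal_mul (by positivity)).symm
            _ ≤ (2⁻¹ : ℝ≥0∞)^m := by
              have he1 : ((2:ℝ)^(m:ℤ))^2 * (2:ℝ) ^ (-(4 * (m:ℤ))) =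
                  (2:ℝ) ^ (-(2 * (m:ℤ))) := by
                rw [sq, ← zpow_add₀ (two_ne_zero), ← zpow_add₀ (two_ne_zero)]
                congr 1
                ring
              have he2 : (2:ℝ) ^ (-(2 * (m:ℤ))) ≤ (2:ℝ) ^ (-(m:ℤ)) :=
                zpow_le_zpow_right₀ one_le_two (by omega)
              have he3 : (2:ℝ) ^ (-(m:ℤ)) = ((2:ℝ)⁻¹)^m := by
                rw [zpow_neg, zpow_natCast, ← inv_pow]
              have he4 : ENNReal.ofReal (((2:ℝ)⁻¹)^m) = (2⁻¹ : ℝ≥0∞)^m := by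
                rw [ENNReal.ofReal_pow (by norm_num : (0:ℝ) ≤ 2⁻¹)]
                congr 1
                rw [ENNReal.ofReal_inv_of_pos two_pos]
                norm_num
              rw [he1, ← he4]
              exact ENNReal.ofReal_le_ofReal (le_of_le_of_eq he2 he3)
            _ ≤ 0 + (2⁻¹ : ℝ≥0∞)^m := le_add_self
      calc ∫⁻ y in F, ENNReal.ofReal ((Ω y)^2) ∂(sphereMeasure n) ≤
          ∫⁻ y in ⋃ m, H m, ENNReal.ofReal ((Ω y)^2) ∂(sphereMeasure n) :=
        lintegral_mono_set hFH
      _ ≤ ∑' m, ∫⁻ y in H m, ENNReal.ofReal ((Ω y)^2) ∂(sphereMeasure n) :=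
        lintegral_iUnion_le _ _
      _ ≤ ∑' m, ((if m = 0 then ENNReal.ofReal a else 0) + (2⁻¹ : ℝ≥0∞)^m) :=
        ENNReal.tsum_le_tsum hHm
      _ = ENNReal.ofReal a + 2 := by
        rw [ENNReal.tsum_add, tsum_ite_eq, ENNReal.tsum_geometric,
          ENNReal.one_sub_inv_two, inv_inv]
    have hc2 : c^2 ≤ cmax^2 := by
      calc c^2 = |c|^2 := (sq_abs _).symm
      _ ≤ cmax^2 := pow_le_pow_left₀ (abs_nonneg _) hc_le 2
    have hpt : ∀ y, ENNReal.ofReal ((Ω₀ y)^2) ≤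
        2 * F.indicator (fun z => ENNReal.ofReal ((Ω z)^2)) y +
          ENNReal.ofReal (2 * cmax^2) := by
      intro y
      have h1 : (Ω₀ y)^2 ≤ 2 * F.indicator (fun z => (Ω z)^2) y + 2 * cmax^2 := by
        rw [hΩ₀' y]
        calc (F.indicator Ω y + c)^2 ≤ 2 * (F.indicator Ω y)^2 + 2 * c^2 :=
          aux_sq _ _
        _ ≤ 2 * F.indicator (fun z => (Ω z)^2) y + 2 * cmax^2 := by
          have : (F.indicator Ω y)^2 = F.indicator (fun z => (Ω z)^2) y := by
            by_cases hy : y ∈ F <;> simp [hy]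
          rw [this]
          linarith
      calc ENNReal.ofReal ((Ω₀ y)^2) ≤
          ENNReal.ofReal (2 * F.indicator (fun z => (Ω z)^2) y + 2 * cmax^2) :=
        ENNReal.ofReal_le_ofReal h1
      _ = ENNReal.ofReal (2 * F.indicator (fun z => (Ω z)^2) y) +
          ENNReal.ofReal (2 * cmax^2) :=
        ENNReal.ofReal_add (by
          by_cases hy : y ∈ F <;> simp [hy] <;> positivity) (by positivity)
      _ = 2 * F.indicator (fun z => ENNReal.ofReal ((Ω z)^2)) y +
          ENNReal.ofReal (2 * cmax^2) := by
        congr 1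
        rw [ENNReal.ofReal_mul (by norm_num)]
        congr 1
        · norm_num
        · by_cases hy : y ∈ F <;> simp [hy]
    have hL : ∫⁻ y, ENNReal.ofReal ((Ω₀ y)^2) ∂(sphereMeasure n) ≤
        ENNReal.ofReal B := by
      have hFind_meas : Measurable (F.indicator
          (fun z => ENNReal.ofReal ((Ω z)^2))) :=
        (ENNReal.measurable_ofReal.comp (hmeas.pow_const 2)).indicator hF_meas
      calc ∫⁻ y, ENNReal.ofReal ((Ω₀ y)^2) ∂(sphereMeasure n) ≤
          ∫⁻ y, (2 * F.indicator (fun z => ENNReal.ofReal ((Ω z)^2)) y +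
            ENNReal.ofReal (2 * cmax^2)) ∂(sphereMeasure n) := lintegral_mono hpt
      _ = 2 * ∫⁻ y in F, ENNReal.ofReal ((Ω y)^2) ∂(sphereMeasure n) +
          ENNReal.ofReal (2 * cmax^2) * sphereMeasure n Set.univ := by
        rw [lintegral_add_right _ measurable_const, lintegral_const,
          lintegral_const_mul' _ _ (by norm_num), lintegral_indicator hF_meas]
      _ ≤ 2 * (ENNReal.ofReal a + 2) + ENNReal.ofReal (2 * cmax^2) *
          ENNReal.ofReal a := by
        rw [hσa]
        gcongr
      _ = ENNReal.ofReal B := by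
        rw [hB_def]
        rw [show (2:ℝ≥0∞) = ENNReal.ofReal 2 from (ENNReal.ofReal_ofNat 2).symm,
          ← ENNReal.ofReal_add ha_pos.le (by norm_num),
          ← ENNReal.ofReal_mul (by norm_num),
          ← ENNReal.ofReal_mul (by positivity),
          ← ENNReal.ofReal_add (by positivity) (by positivity)]
    have h1 : (∫⁻ y, ENNReal.ofReal ((Ω₀ y)^2) ∂(sphereMeasure n)) ^ (1/(2:ℝ)) ≤
        ENNReal.ofReal B + 1 :=
      le_trans (ENNReal.rpow_le_rpow hL (by norm_num)) (aux_rpow_half_le _)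
    calc (∫⁻ y, ENNReal.ofReal ((Ω₀ y)^2) ∂(sphereMeasure n)) ^ (1/(2:ℝ)) +
        ∑' m : ℕ, (m:ℝ≥0∞) * ∫⁻ y, ENNReal.ofReal |g m y| ∂(sphereMeasure n) ≤
        (ENNReal.ofReal B + 1) + ENNReal.ofReal (4 / Real.log 2) :=
      add_le_add h1 hS
    _ = ENNReal.ofReal Cr := by
      rw [hCr_def, show (1:ℝ≥0∞) = ENNReal.ofReal 1 from ENNReal.ofReal_one.symm,
        ← ENNReal.ofReal_add hB_nonneg (by norm_num),
        ← ENNReal.ofReal_add (by positivity) (by positivity)]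
    _ = (Cr.toNNReal : ℝ≥0∞) := rfl

end
end
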